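/- Let n ≥ 1, let α₁,…,αₙ be non-negative real weights with α₁+⋯+αₙ = 1, and let G₁,…,Gₙ:[0,1]→ℝ be exposure curves (twice continuously differentiable, non-decreasing, concave, Gᵢ(0)=0, Gᵢ(1)=1, Gᵢ'(0)>0). Suppose at least one αᵢ with αᵢ Gᵢ'(0) > 0 exists (which holds since the weights sum to 1). Then G(z) = Σᵢ αᵢ Gᵢ(z) is again an exposure curve, and the induced distribution function F_Z (defined by F_Z(z) = 1 − G'(z)/G'(0) for z < 1 and F_Z(1) = 1) satisfies F_Z(z) = Σᵢ wᵢ Fᵢ(z) for all z ∈ [0,1], where Fᵢ is the distribution function induced by Gᵢ in the same way, and wᵢ = αᵢ Gᵢ'(0) / Σⱼ αⱼ Gⱼ'(0) are non-negative weights summing to 1. Moreover ∫₀¹ (1 − F_Z(s)) ds = Σᵢ wᵢ / Gᵢ'(0). -/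

import Mathlib

/-- An exposure curve: a function `G : [0,1] → ℝ` that is twice continuously
differentiable (with continuous second derivative on `[0,1]`), non-decreasing,
concave, with `G 0 = 0`, `G 1 = 1` and `G' 0 > 0`. -/
def IsExposureCurve (G : ℝ → ℝ) : Prop :=
  MonotoneOn G (Set.Icc 0 1) ∧ ConcaveOn ℝ (Set.Icc 0 1) G ∧
  G 0 = 0 ∧ G 1 = 1 ∧
  ∃ G' G'' : ℝ → ℝ,
    (∀ z ∈ Set.Icc (0:ℝ) 1, HasDerivWithinAt G (G' z) (Set.Icc 0 1) z) ∧
    (∀ z ∈ Set.Icc (0:ℝ) 1, HasDerivWithinAt G' (G'' z) (Set.Icc 0 1) z) ∧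
    ContinuousOn G'' (Set.Icc 0 1) ∧ 0 < G' 0

/-- The distribution function induced by an exposure curve with derivative `G'`:
`F z = 1 - G' z / G' 0` for `z < 1` and `F 1 = 1`. -/
noncomputable def inducedDF (G' : ℝ → ℝ) : ℝ → ℝ :=
  fun z => if z = 1 then 1 else 1 - G' z / G' 0

/-- A convex combination `G = ∑ αᵢ Gᵢ` of exposure curves is again an
exposure curve; the induced distribution function is the mixture `∑ wᵢ Fᵢ` of the
induced distribution functions with weights `wᵢ = αᵢ Gᵢ' 0 / ∑ⱼ αⱼ Gⱼ' 0` (non-negative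
and summing to 1), and the mean satisfies `∫₀¹ (1 - F_Z s) ds = ∑ wᵢ / Gᵢ' 0`. -/
theorem statement2 (n : ℕ) (hn : 1 ≤ n) (α : Fin n → ℝ)
    (hα : ∀ i, 0 ≤ α i) (hsum : ∑ i, α i = 1)
    (Gs Gs' Gs'' : Fin n → ℝ → ℝ)
    (hd1 : ∀ i, ∀ z ∈ Set.Icc (0:ℝ) 1, HasDerivWithinAt (Gs i) (Gs' i z) (Set.Icc 0 1) z)
    (hd2 : ∀ i, ∀ z ∈ Set.Icc (0:ℝ) 1, HasDerivWithinAt (Gs' i) (Gs'' i z) (Set.Icc 0 1) z)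
    (hcont : ∀ i, ContinuousOn (Gs'' i) (Set.Icc 0 1))
    (hmono : ∀ i, MonotoneOn (Gs i) (Set.Icc 0 1))
    (hconc : ∀ i, ConcaveOn ℝ (Set.Icc 0 1) (Gs i))
    (h0 : ∀ i, Gs i 0 = 0) (h1 : ∀ i, Gs i 1 = 1)
    (hpos : ∀ i, 0 < Gs' i 0)
    (hex : ∃ i, 0 < α i * Gs' i 0) :
    IsExposureCurve (fun z => ∑ i, α i * Gs i z) ∧
    (∀ i, 0 ≤ α i * Gs' i 0 / ∑ j, α j * Gs' j 0) ∧
    (∑ i, α i * Gs' i 0 / ∑ j, α j * Gs' j 0) = 1 ∧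
    (∀ z ∈ Set.Icc (0:ℝ) 1,
      inducedDF (fun z => ∑ i, α i * Gs' i z) z
        = ∑ i, (α i * Gs' i 0 / ∑ j, α j * Gs' j 0) * inducedDF (Gs' i) z) ∧
    (∫ s in (0:ℝ)..1, (1 - inducedDF (fun z => ∑ i, α i * Gs' i z) s))
        = ∑ i, (α i * Gs' i 0 / ∑ j, α j * Gs' j 0) * (1 / Gs' i 0) := by
  classical
  set S := ∑ j, α j * Gs' j 0 with hS
  have hterm : ∀ i, 0 ≤ α i * Gs' i 0 := fun i => mul_nonneg (hα i) (hpos i).le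
  have hSpos : 0 < S := by
    obtain ⟨i, hi⟩ := hex
    exact Finset.sum_pos' (fun j _ => hterm j) ⟨i, Finset.mem_univ i, hi⟩
  have hSne : S ≠ 0 := hSpos.ne'
  have hG'cont : ∀ i, ContinuousOn (Gs' i) (Set.Icc 0 1) := fun i =>
    fun z hz => ((hd2 i z hz).continuousWithinAt)
  -- weights nonneg
  have hwnn : ∀ i, 0 ≤ α i * Gs' i 0 / S := fun i => div_nonneg (hterm i) hSpos.le
  -- weights sum to 1
  have hwsum : (∑ i, α i * Gs' i 0 / S) = 1 := by
    rw [← Finset.sum_div, ← hS, div_self hSne]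
  refine ⟨?_, hwnn, hwsum, ?_, ?_⟩
  · -- exposure curve
    refine ⟨?_, ?_, by simp [h0], by simp [h1, hsum], fun z => ∑ i, α i * Gs' i z,
      fun z => ∑ i, α i * Gs'' i z, ?_, ?_, ?_, ?_⟩
    · intro a ha b hb hab
      exact Finset.sum_le_sum fun i _ =>
        mul_le_mul_of_nonneg_left (hmono i ha hb hab) (hα i)
    · refine ⟨convex_Icc 0 1, ?_⟩
      intro x hx y hy a b ha hb hab
      simp only [smul_eq_mul, Finset.mul_sum]
      rw [← Finset.sum_add_distrib]
      refine Finset.sum_le_sum fun i _ => ?_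
      have := (hconc i).2 hx hy ha hb hab
      simp only [smul_eq_mul] at this
      nlinarith [hα i]
    · intro z hz
      exact HasDerivWithinAt.fun_sum fun i _ => ((hd1 i z hz).const_mul (α i))
    · intro z hz
      exact HasDerivWithinAt.fun_sum fun i _ => ((hd2 i z hz).const_mul (α i))
    · exact continuousOn_finset_sum _ fun i _ => (hcont i).const_smul (α i)
    · exact hSpos
  · -- mixture identity
    intro z hz
    by_cases hz1 : z = 1
    · subst hz1
      simp only [inducedDF, if_pos rfl, mul_one, ite_true]
      simp [hwsum.symm]
    · simp only [inducedDF, if_neg hz1]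
      have : ∀ i, (α i * Gs' i 0 / S) * (1 - Gs' i z / Gs' i 0)
          = α i * Gs' i 0 / S - α i * Gs' i z / S := by
        intro i
        have h0i : Gs' i 0 ≠ 0 := (hpos i).ne'
        field_simp
      rw [Finset.sum_congr rfl fun i _ => this i, Finset.sum_sub_distrib, hwsum,
        ← Finset.sum_div]
  · -- integral
    have hint : ∀ i, IntervalIntegrable (Gs' i) MeasureTheory.volume 0 1 := fun i =>
      (hG'cont i).intervalIntegrable_of_Icc zero_le_one
    have hFTC : ∀ i, (∫ s in (0:ℝ)..1, Gs' i s) = 1 := by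
      intro i
      have := intervalIntegral.integral_eq_sub_of_hasDerivAt_of_le zero_le_one
        (fun z hz => (hd1 i z hz).continuousWithinAt)
        (fun x hx => (hd1 i x (Set.mem_Icc_of_Ioo hx)).hasDerivAt
          (Icc_mem_nhds hx.1 hx.2)) (hint i)
      rw [this, h1 i, h0 i]; ring
    have hcongr : (∫ s in (0:ℝ)..1, (1 - inducedDF (fun z => ∑ i, α i * Gs' i z) s))
        = ∫ s in (0:ℝ)..1, (∑ i, α i * Gs' i s) / S := by
      apply intervalIntegral.integral_congr_ae
      have h1ne : ∀ᵐ x : ℝ ∂MeasureTheory.volume, x ≠ 1 := by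
        rw [MeasureTheory.ae_iff]
        convert Real.volume_singleton (a := 1) using 2
        ext x; simp
      filter_upwards [h1ne] with x hx _
      simp [inducedDF, hx, ← hS, sub_sub_cancel, div_eq_mul_inv]
    rw [hcongr]
    have heq : (fun s => (∑ i, α i * Gs' i s) / S)
        = fun s => ∑ i, (α i / S) * Gs' i s := by
      funext s
      rw [Finset.sum_div]
      exact Finset.sum_congr rfl fun i _ => by ring
    have : (∫ s in (0:ℝ)..1, (∑ i, α i * Gs' i s) / S)
        = ∑ i, (α i / S) * ∫ s in (0:ℝ)..1, Gs' i s := by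
      simp only [heq]
      rw [intervalIntegral.integral_finset_sum fun i _ => (hint i).const_mul (α i / S)]
      exact Finset.sum_congr rfl fun i _ => intervalIntegral.integral_const_mul _ _
    rw [this]
    refine Finset.sum_congr rfl fun i _ => ?_
    rw [hFTC i]
    have h0i : Gs' i 0 ≠ 0 := (hpos i).ne'
    field_simp
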